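/- Let H = (V, E) be a finite hypergraph such that (i) every hyperedge intersects at most Γ other hyperedges, and (ii) every hyperedge E satisfies r ≤ |E| ≤ ℓ·r, where ℓ ≥ 1 is an integer and r ≥ 2·log₂(4Γ). Then H admits a conflict-free coloring with at most e·ℓ·r colors, where e is the base of the natural logarithm. -/

import Mathlib

open Finset
set_option maxHeartbeats 1000000
set_option linter.unusedSectionVars false


/-- `m^m * e ≤ e^m * m!` for `m ≥ 1`. -/
lemma pow_self_le_exp_factorial : ∀ m : ℕ, 1 ≤ m →
    (m:ℝ) ^ m * Real.exp 1 ≤ Real.exp 1 ^ m * m.factorial := by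
  intro m hm
  induction m, hm using Nat.le_induction with
  | base => simp
  | succ m hm ih =>
    have hMpos : (0:ℝ) < (m:ℝ) := by exact_mod_cast hm
    have hstep : ((m:ℝ) + 1) ^ m ≤ (m:ℝ) ^ m * Real.exp 1 := by
      have h1 : (m:ℝ) + 1 = (m:ℝ) * (1 + 1 / m) := by field_simp
      have h2 : (1 + 1 / (m:ℝ)) ^ m ≤ Real.exp 1 := by
        calc (1 + 1 / (m:ℝ)) ^ m ≤ Real.exp (1 / (m:ℝ)) ^ m := by
              apply pow_le_pow_left₀ (by positivity)
              linarith [Real.add_one_le_exp (1 / (m:ℝ))]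
          _ = Real.exp ((m:ℕ) * (1 / (m:ℝ))) := by rw [Real.exp_nat_mul]
          _ = Real.exp 1 := by congr 1; field_simp
      calc ((m:ℝ) + 1) ^ m = (m:ℝ) ^ m * (1 + 1 / (m:ℝ)) ^ m := by
            rw [h1, mul_pow]
        _ ≤ (m:ℝ) ^ m * Real.exp 1 :=
            mul_le_mul_of_nonneg_left h2 (by positivity)
    have hfac : ((m+1 : ℕ).factorial : ℝ) = ((m:ℝ) + 1) * (m.factorial : ℝ) := by
      rw [Nat.factorial_succ]; push_cast; ring
    have hepos : (0:ℝ) < Real.exp 1 := Real.exp_pos 1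
    push_cast
    calc ((m:ℝ) + 1) ^ (m + 1) * Real.exp 1
        = (((m:ℝ) + 1) ^ m) * (((m:ℝ) + 1) * Real.exp 1) := by ring
      _ ≤ ((m:ℝ) ^ m * Real.exp 1) * (((m:ℝ) + 1) * Real.exp 1) := by
          apply mul_le_mul_of_nonneg_right hstep (by positivity)
      _ = ((m:ℝ) ^ m * Real.exp 1) * ((m:ℝ) + 1) * Real.exp 1 := by ring
      _ ≤ (Real.exp 1 ^ m * m.factorial) * ((m:ℝ) + 1) * Real.exp 1 := by
          apply mul_le_mul_of_nonneg_right _ (le_of_lt hepos)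
          apply mul_le_mul_of_nonneg_right ih (by positivity)
      _ = Real.exp 1 ^ (m + 1) * (((m:ℝ) + 1) * (m.factorial : ℝ)) := by ring
      _ = Real.exp 1 ^ (m + 1) * ((m+1 : ℕ).factorial : ℝ) := by rw [hfac]

lemma key_ineq (k s m Γ : ℕ) (r : ℝ)
    (hm : m = s / 2) (hs4 : 4 ≤ s) (hΓ1 : 1 ≤ Γ)
    (hrs : r ≤ (s:ℝ)) (hΓr : 2 * Real.logb 2 (4 * Γ) ≤ r)
    (hk : Real.exp 1 * s - 1 ≤ (k:ℝ)) :
    ((k.choose m : ℕ) : ℝ) * (m:ℝ) ^ s * (Real.exp 1 * ((Γ:ℝ) + 1)) ≤ (k:ℝ) ^ s := by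
  have hegt : (2.7182818283:ℝ) < Real.exp 1 := Real.exp_one_gt_d9
  set e : ℝ := Real.exp 1 with he
  have he1 : (1:ℝ) ≤ e := by norm_num at hegt ⊢; linarith
  have hepos : (0:ℝ) < e := by linarith
  have hm2 : 2 ≤ m := by omega
  have hM2 : (2:ℝ) ≤ (m:ℝ) := by exact_mod_cast hm2
  have hMpos : (0:ℝ) < (m:ℝ) := by linarith
  set M : ℝ := (m:ℝ) with hM
  set K : ℝ := (k:ℝ) with hK
  have hs2m : 2 * m ≤ s := by omega
  have hs2m' : s ≤ 2 * m + 1 := by omega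
  have hKlb : 2 * e * M - 1 ≤ K := by
    have h1 : (2:ℝ) * (m:ℕ) ≤ (s:ℕ) := by exact_mod_cast hs2m
    nlinarith [hk, hepos]
  have hKpos : (0:ℝ) < K := by nlinarith
  have hGpos : (0:ℝ) < 4 * (Γ:ℝ) := by
    have : (1:ℝ) ≤ (Γ:ℝ) := by exact_mod_cast hΓ1
    linarith
  have hΓR1 : (1:ℝ) ≤ (Γ:ℝ) := by exact_mod_cast hΓ1
  -- Γ bound via rpow
  have hG : 4 * (Γ:ℝ) ≤ (2:ℝ) ^ ((s:ℝ)/2) := by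
    have hlogb : Real.logb 2 (4 * (Γ:ℝ)) ≤ (s:ℝ)/2 := by linarith
    have := (Real.logb_le_iff_le_rpow (by norm_num) hGpos).mp hlogb
    exact_mod_cast this
  -- choose bound
  have hA : ((k.choose m : ℕ) : ℝ) * (m.factorial : ℝ) ≤ K ^ m := by
    have hnat : k.choose m * m.factorial ≤ k ^ m := by
      rw [mul_comm, ← Nat.descFactorial_eq_factorial_mul_choose]
      exact Nat.descFactorial_le_pow k m
    rw [hK]; exact_mod_cast hnat
  have hB : M ^ m * e ≤ e ^ m * (m.factorial : ℝ) :=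
    pow_self_le_exp_factorial m (by omega)
  have hchoosepos : (0:ℝ) ≤ ((k.choose m : ℕ) : ℝ) := Nat.cast_nonneg _
  have hfacpos : (0:ℝ) < (m.factorial : ℝ) := by exact_mod_cast m.factorial_pos
  have hAB : ((k.choose m : ℕ) : ℝ) * M ^ m * e ≤ K ^ m * e ^ m := by
    have h1 : ((k.choose m : ℕ) : ℝ) * (M ^ m * e) ≤ ((k.choose m : ℕ) : ℝ) * (e ^ m * (m.factorial : ℝ)) :=
      mul_le_mul_of_nonneg_left hB hchoosepos
    have h2 : ((k.choose m : ℕ) : ℝ) * (e ^ m * (m.factorial : ℝ))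
        = (((k.choose m : ℕ) : ℝ) * (m.factorial : ℝ)) * e ^ m := by ring
    have h3 : (((k.choose m : ℕ) : ℝ) * (m.factorial : ℝ)) * e ^ m ≤ K ^ m * e ^ m :=
      mul_le_mul_of_nonneg_right hA (by positivity)
    calc ((k.choose m : ℕ) : ℝ) * M ^ m * e = ((k.choose m : ℕ) : ℝ) * (M ^ m * e) := by ring
      _ ≤ _ := h1
      _ = _ := h2
      _ ≤ _ := h3
  -- the core even-case estimate
  have hcore : (2 * e * M) ^ m ≤ 2 * K ^ m := by
    set a : ℝ := 2 * e * M - 1 with ha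
    have hapos : (0:ℝ) < a := by nlinarith
    have haK : a ≤ K := hKlb
    have h2e1 : (2:ℝ) ≤ 2 * e - 1 := by linarith
    have hma : M * (1/a) ≤ 1/(2*e - 1) := by
      rw [mul_one_div, div_le_div_iff₀ hapos (by linarith)]
      nlinarith
    have hexp2 : Real.exp (1/(2*e - 1)) ≤ 2 := by
      set y : ℝ := 1/(2*e - 1) with hy
      have hy0 : 0 < y := by positivity
      have hy12 : y ≤ 1/2 := by
        rw [hy, div_le_div_iff₀ (by linarith) (by norm_num)]
        linarith
      have hexpneg : 1 - y ≤ Real.exp (-y) := by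
        have := Real.add_one_le_exp (-y)
        linarith
      have hexppos : 0 < Real.exp (-y) := Real.exp_pos _
      have h1y : (0:ℝ) < 1 - y := by linarith
      have hkey : Real.exp y * (1 - y) ≤ 1 := by
        calc Real.exp y * (1 - y) ≤ Real.exp y * Real.exp (-y) :=
              mul_le_mul_of_nonneg_left hexpneg (le_of_lt (Real.exp_pos _))
          _ = 1 := by rw [← Real.exp_add]; simp
      have h12 : (1:ℝ)/2 ≤ 1 - y := by linarith
      have h2 : Real.exp y * (1/2) ≤ Real.exp y * (1 - y) :=
        mul_le_mul_of_nonneg_left h12 (le_of_lt (Real.exp_pos _))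
      linarith
    have hpow : (1 + 1/a) ^ m ≤ 2 := by
      calc (1 + 1/a) ^ m ≤ Real.exp (1/a) ^ m := by
            apply pow_le_pow_left₀ (by positivity)
            linarith [Real.add_one_le_exp (1/a)]
        _ = Real.exp ((m:ℝ) * (1/a)) := by rw [← Real.exp_nat_mul]
        _ ≤ Real.exp (1/(2*e - 1)) := Real.exp_le_exp.mpr hma
        _ ≤ 2 := hexp2
    have hfact : 2 * e * M = a * (1 + 1/a) := by
      have hane : a ≠ 0 := ne_of_gt hapos
      have h' : a * (1 + 1/a) = a + 1 := by field_simp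
      rw [h', ha]; ring
    calc (2 * e * M) ^ m = a ^ m * (1 + 1/a) ^ m := by rw [hfact, mul_pow]
      _ ≤ a ^ m * 2 := mul_le_mul_of_nonneg_left hpow (by positivity)
      _ ≤ K ^ m * 2 := by
          apply mul_le_mul_of_nonneg_right _ (by norm_num)
          exact pow_le_pow_left₀ (le_of_lt hapos) haK m
      _ = 2 * K ^ m := by ring
  rcases Nat.even_or_odd s with hev | hodd
  · -- even case : s = 2 * m
    have hseq : s = 2 * m := by
      rcases hev with ⟨t, ht⟩; omega
    have hGm : 4 * (Γ:ℝ) ≤ 2 ^ m := by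
      have h1 : ((s:ℝ))/2 = (m:ℝ) := by
        rw [hseq]; push_cast; ring
      rw [h1, Real.rpow_natCast] at hG
      exact hG
    have hcore2 : e ^ m * M ^ m * ((Γ:ℝ) + 1) ≤ K ^ m := by
      have h2G : 2 * ((Γ:ℝ) + 1) ≤ 2 ^ m := by linarith
      have h1 : 2 * (e ^ m * M ^ m * ((Γ:ℝ) + 1)) = e ^ m * M ^ m * (2 * ((Γ:ℝ)+1)) := by ring
      have h2 : e ^ m * M ^ m * (2 * ((Γ:ℝ)+1)) ≤ e ^ m * M ^ m * 2 ^ m := by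
        apply mul_le_mul_of_nonneg_left h2G (by positivity)
      have h3 : e ^ m * M ^ m * 2 ^ m = (2 * e * M) ^ m := by
        rw [mul_pow, mul_pow]; ring
      nlinarith [hcore]
    have hKsum : K ^ s = K ^ m * K ^ m := by rw [hseq, two_mul, pow_add]
    have hMsum : M ^ s = M ^ m * M ^ m := by rw [hseq, two_mul, pow_add]
    rw [hKsum, hMsum]
    calc ((k.choose m : ℕ) : ℝ) * (M ^ m * M ^ m) * (e * ((Γ:ℝ) + 1))
        = (((k.choose m : ℕ) : ℝ) * M ^ m * e) * (M ^ m * ((Γ:ℝ) + 1)) := by ring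
      _ ≤ (K ^ m * e ^ m) * (M ^ m * ((Γ:ℝ) + 1)) := by
          apply mul_le_mul_of_nonneg_right hAB
          have : (0:ℝ) ≤ M ^ m := by positivity
          nlinarith [hΓR1]
      _ = K ^ m * (e ^ m * M ^ m * ((Γ:ℝ) + 1)) := by ring
      _ ≤ K ^ m * K ^ m := by
          apply mul_le_mul_of_nonneg_left hcore2 (by positivity)
  · -- odd case : s = 2 * m + 1
    have hseq : s = 2 * m + 1 := by
      rcases hodd with ⟨t, ht⟩; omega
    have hGm : (Γ:ℝ) + 1 ≤ 2 ^ m := by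
      have h1 : ((s:ℝ))/2 ≤ (m:ℝ) + 1 := by
        rw [hseq]; push_cast; linarith
      have h2 : (2:ℝ) ^ ((s:ℝ)/2) ≤ (2:ℝ) ^ ((m:ℝ) + 1) :=
        Real.rpow_le_rpow_of_exponent_le (by norm_num) h1
      have h3 : (2:ℝ) ^ ((m:ℝ) + 1) = 2 ^ (m + 1) := by
        rw [show ((m:ℝ) + 1) = ((m + 1 : ℕ) : ℝ) by push_cast; ring, Real.rpow_natCast]
      have h4 : 4 * (Γ:ℝ) ≤ 2 ^ (m+1) := by
        rw [← h3]; exact le_trans hG h2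
      have h5 : (2:ℝ) ^ (m+1) = 2 * 2 ^ m := by rw [pow_succ]; ring
      nlinarith [h4, h5, hΓR1]
    have hsR : (s:ℝ) = 2*M + 1 := by rw [hseq]; push_cast; ring
    have h2eMK : 2 * e * M ≤ K := by rw [hsR] at hk; linarith
    have hMK : M ≤ K := by nlinarith [h2eMK, hMpos, he1]
    have hcore2 : e ^ m * M ^ (m+1) * ((Γ:ℝ) + 1) ≤ K ^ (m+1) := by
      calc e ^ m * M ^ (m+1) * ((Γ:ℝ) + 1) ≤ e ^ m * M ^ (m+1) * 2 ^ m := by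
            apply mul_le_mul_of_nonneg_left hGm (by positivity)
        _ = (2 * e * M) ^ m * M := by
            rw [mul_pow, mul_pow, pow_succ]; ring
        _ ≤ K ^ m * K := by
            apply mul_le_mul
            · exact pow_le_pow_left₀ (by positivity) h2eMK m
            · exact hMK
            · positivity
            · positivity
        _ = K ^ (m+1) := by rw [pow_succ]
    have hKsum : K ^ s = K ^ m * K ^ (m+1) := by rw [hseq, ← pow_add]; congr 1; ring
    have hMsum : M ^ s = M ^ m * M ^ (m+1) := by rw [hseq, ← pow_add]; congr 1; ring
    rw [hKsum, hMsum]
    calc ((k.choose m : ℕ) : ℝ) * (M ^ m * M ^ (m+1)) * (e * ((Γ:ℝ) + 1))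
        = (((k.choose m : ℕ) : ℝ) * M ^ m * e) * (M ^ (m+1) * ((Γ:ℝ) + 1)) := by ring
      _ ≤ (K ^ m * e ^ m) * (M ^ (m+1) * ((Γ:ℝ) + 1)) := by
          apply mul_le_mul_of_nonneg_right hAB
          have : (0:ℝ) ≤ M ^ (m+1) := by positivity
          nlinarith [hΓR1]
      _ = K ^ m * (e ^ m * M ^ (m+1) * ((Γ:ℝ) + 1)) := by ring
      _ ≤ K ^ m * K ^ (m+1) := by
          apply mul_le_mul_of_nonneg_left hcore2 (by positivity)


section LLL
variable {V : Type} [Fintype V] [DecidableEq V] {κ : Type} [Fintype κ] [DecidableEq κ]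
variable (Bad : Finset V → (V → κ) → Prop) [∀ E, DecidablePred (Bad E)]

def GoodSet (S : Finset (Finset V)) : Finset (V → κ) :=
  univ.filter fun f => ∀ F ∈ S, ¬ Bad F f

lemma GoodSet_empty : GoodSet Bad (∅ : Finset (Finset V)) = univ := by
  simp [GoodSet]

lemma GoodSet_anti {S T : Finset (Finset V)} (h : S ⊆ T) :
    GoodSet Bad T ⊆ GoodSet Bad S := by
  intro f hf
  simp only [GoodSet, mem_filter, mem_univ, true_and] at hf ⊢
  exact fun F hF => hf F (h hF)

lemma GoodSet_insert (F : Finset V) (U : Finset (Finset V)) :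
    GoodSet Bad (insert F U) = (GoodSet Bad U).filter fun f => ¬ Bad F f := by
  ext f
  simp only [GoodSet, mem_filter, mem_univ, true_and, Finset.forall_mem_insert]
  tauto

lemma GoodSet_card_insert (F : Finset V) (U : Finset (Finset V)) :
    (GoodSet Bad (insert F U)).card + ((GoodSet Bad U).filter (Bad F)).card
      = (GoodSet Bad U).card := by
  rw [GoodSet_insert, add_comm]
  exact Finset.card_filter_add_card_filter_not (Bad F)

/-- Counting independence for events determined by disjoint coordinate sets. -/
lemma indep_card (A : Finset V) (P Q : (V → κ) → Prop)
    [DecidablePred P] [DecidablePred Q]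
    (hP : ∀ f g : V → κ, (∀ v ∈ A, f v = g v) → P f → P g)
    (hQ : ∀ f g : V → κ, (∀ v ∉ A, f v = g v) → Q f → Q g) :
    (univ.filter fun f => P f ∧ Q f).card * (univ : Finset (V → κ)).card
      = (univ.filter P).card * (univ.filter Q).card := by
  classical
  rw [← Finset.card_product, ← Finset.card_product]
  refine Finset.card_bij'
    (fun p _ => ((fun v => if v ∈ A then p.1 v else p.2 v),
                      (fun v => if v ∈ A then p.2 v else p.1 v)))
    (fun p _ => ((fun v => if v ∈ A then p.1 v else p.2 v),
                      (fun v => if v ∈ A then p.2 v else p.1 v))) ?hi ?hj ?li ?ri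
  case hi =>
    rintro ⟨f, g⟩ hp
    simp only [Finset.mem_product, Finset.mem_filter, Finset.mem_univ, true_and] at hp ⊢
    obtain ⟨⟨hPf, hQf⟩, -⟩ := hp
    exact ⟨hP f _ (fun v hv => by simp [hv]) hPf, hQ f _ (fun v hv => by simp [hv]) hQf⟩
  case hj =>
    rintro ⟨f, g⟩ hp
    simp only [Finset.mem_product, Finset.mem_filter, Finset.mem_univ, true_and, and_true] at hp ⊢
    obtain ⟨hPf, hQg⟩ := hp
    exact ⟨hP f _ (fun v hv => by simp [hv]) hPf, hQ g _ (fun v hv => by simp [hv]) hQg⟩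
  case li =>
    rintro ⟨f, g⟩ _
    refine Prod.ext ?_ ?_ <;> funext v <;> by_cases hv : v ∈ A <;> simp [hv]
  case ri =>
    rintro ⟨f, g⟩ _
    refine Prod.ext ?_ ?_ <;> funext v <;> by_cases hv : v ∈ A <;> simp [hv]

variable (𝓔 : Finset (Finset V)) (Γ : ℕ)

/-- The core LLL induction. -/
lemma lll_main (hΓ : 1 ≤ Γ)
    (hdet : ∀ E ∈ 𝓔, ∀ f g : V → κ, (∀ v ∈ E, f v = g v) → Bad E f → Bad E g)
    (hdeg : ∀ E ∈ 𝓔, (𝓔.filter (fun F => F ≠ E ∧ (F ∩ E).Nonempty)).card ≤ Γ)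
    (hp : ∀ E ∈ 𝓔, ((univ.filter (Bad E)).card : ℝ) * (Real.exp 1 * (Γ + 1))
            ≤ ((univ : Finset (V → κ)).card : ℝ)) :
    ∀ n (S : Finset (Finset V)), S.card ≤ n → S ⊆ 𝓔 → ∀ E ∈ 𝓔,
      (((GoodSet Bad S).filter (Bad E)).card : ℝ) * (Γ + 1) ≤ (GoodSet Bad S).card := by
  intro n
  induction n using Nat.strong_induction_on with
  | _ n ih =>
    intro S hScard hSsub E hE
    by_cases hES : E ∈ S
    · -- E ∈ S : the filtered set is empty
      have : (GoodSet Bad S).filter (Bad E) = ∅ := by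
        refine Finset.filter_false_of_mem ?_
        intro f hf
        simp only [GoodSet, mem_filter, mem_univ, true_and] at hf
        exact hf E hES
      rw [this]
      simp only [Finset.card_empty, Nat.cast_zero, zero_mul]
      exact Nat.cast_nonneg _
    · -- E ∉ S
      set x : ℝ := 1 / (Γ + 1) with hx
      have hΓpos : (0:ℝ) < (Γ:ℝ) + 1 := by positivity
      have hx01 : 0 < x ∧ x < 1 := by
        constructor
        · positivity
        · rw [hx, div_lt_one hΓpos]
          have : (1:ℝ) ≤ (Γ:ℝ) := by exact_mod_cast hΓ
          linarith
      set S₁ := S.filter (fun F => (F ∩ E).Nonempty) with hS₁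
      set S₂ := S.filter (fun F => ¬ (F ∩ E).Nonempty) with hS₂
      have hS₁card : S₁.card ≤ Γ := by
        refine le_trans (Finset.card_le_card ?_) (hdeg E hE)
        intro F hF
        simp only [hS₁, mem_filter] at hF
        refine mem_filter.mpr ⟨hSsub hF.1, ?_, hF.2⟩
        rintro rfl; exact hES hF.1
      have hS₂sub : S₂ ⊆ S := Finset.filter_subset _ _
      have hunion : S₂ ∪ S₁ = S := by
        ext F
        simp only [hS₂, hS₁, mem_union, mem_filter]
        tauto
      have hdisj : Disjoint S₂ S₁ := by
        rw [hS₂, hS₁]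
        exact disjoint_filter_filter_not S S (fun F => (F ∩ E).Nonempty) |>.symm
      have hcards : S₂.card + S₁.card = S.card := by
        rw [← Finset.card_union_of_disjoint hdisj, hunion]
      -- lower bound on good sets by induction over T ⊆ S₁
      have hlow : ∀ T ⊆ S₁, ((1 - x) ^ T.card) * ((GoodSet Bad S₂).card : ℝ)
          ≤ ((GoodSet Bad (S₂ ∪ T)).card : ℝ) := by
        intro T
        induction T using Finset.induction_on with
        | empty => intro _; simp
        | insert _ _ hFT =>
          rename_i F T ihT
          intro hsub
          have hFS₁ : F ∈ S₁ := hsub (mem_insert_self F T)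
          have hTsub : T ⊆ S₁ := (Finset.insert_subset_iff.mp hsub).2
          have hUsub : S₂ ∪ T ⊆ 𝓔 :=
            Finset.union_subset (fun F hF => hSsub (hS₂sub hF))
              (fun G hG => hSsub (Finset.filter_subset _ _ (hTsub hG)))
          have hUcard : (S₂ ∪ T).card < n := by
            have h1 : (S₂ ∪ T).card ≤ S₂.card + T.card := Finset.card_union_le _ _
            have h2 : T.card < S₁.card :=
              Finset.card_lt_card (Finset.ssubset_iff_of_subset hTsub |>.mpr ⟨F, hFS₁, hFT⟩)
            omega
          have hF𝓔 : F ∈ 𝓔 := hSsub (Finset.filter_subset _ _ hFS₁)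
          have hbadF := ih (S₂ ∪ T).card hUcard (S₂ ∪ T) le_rfl hUsub F hF𝓔
          have hins := GoodSet_card_insert Bad F (S₂ ∪ T)
          have hins' : ((GoodSet Bad (insert F (S₂ ∪ T))).card : ℝ)
              = ((GoodSet Bad (S₂ ∪ T)).card : ℝ)
                - (((GoodSet Bad (S₂ ∪ T)).filter (Bad F)).card : ℝ) := by
            have := congrArg (fun t : ℕ => (t : ℝ)) hins
            push_cast at this
            linarith
          have hG2nonneg : (0:ℝ) ≤ ((GoodSet Bad S₂).card : ℝ) := Nat.cast_nonneg _
          have hGUnonneg : (0:ℝ) ≤ ((GoodSet Bad (S₂ ∪ T)).card : ℝ) := Nat.cast_nonneg _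
          have hstep : (1 - x) * ((GoodSet Bad (S₂ ∪ T)).card : ℝ)
              ≤ ((GoodSet Bad (insert F (S₂ ∪ T))).card : ℝ) := by
            rw [hins']
            have hxG : (((GoodSet Bad (S₂ ∪ T)).filter (Bad F)).card : ℝ)
                ≤ x * ((GoodSet Bad (S₂ ∪ T)).card : ℝ) := by
              rw [hx]
              rw [div_mul_eq_mul_div, le_div_iff₀ hΓpos]
              linarith [hbadF]
            nlinarith [hxG]
          have hrec := ihT hTsub
          have hcardins : (insert F T).card = T.card + 1 :=
            Finset.card_insert_of_notMem hFT
          rw [Finset.union_insert]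
          calc (1 - x) ^ (insert F T).card * ((GoodSet Bad S₂).card : ℝ)
              = (1 - x) * ((1 - x) ^ T.card * ((GoodSet Bad S₂).card : ℝ)) := by
                rw [hcardins]; ring
            _ ≤ (1 - x) * ((GoodSet Bad (S₂ ∪ T)).card : ℝ) := by
                apply mul_le_mul_of_nonneg_left hrec
                linarith [hx01.2]
            _ ≤ _ := hstep
      -- independence
      have hgoodeq : (GoodSet Bad S₂).filter (Bad E)
          = univ.filter (fun f => Bad E f ∧ ∀ F ∈ S₂, ¬ Bad F f) := by
        ext f
        simp only [GoodSet, mem_filter, mem_univ, true_and]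
        tauto
      have hindep : (((GoodSet Bad S₂).filter (Bad E)).card : ℝ)
            * (((univ : Finset (V → κ)).card : ℝ))
          = ((univ.filter (Bad E)).card : ℝ) * ((GoodSet Bad S₂).card : ℝ) := by
        rw [hgoodeq]
        have := indep_card (A := E) (P := Bad E) (Q := fun f => ∀ F ∈ S₂, ¬ Bad F f)
          (hdet E hE)
          (by
            intro f g hfg hQf F hFS₂ hBadg
            have hFdisj : ∀ v ∈ F, v ∉ E := by
              intro v hv hvE
              have := (mem_filter.mp hFS₂).2
              exact this ⟨v, Finset.mem_inter.mpr ⟨hv, hvE⟩⟩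
            exact hQf F hFS₂ (hdet F (hSsub (hS₂sub hFS₂)) g f
              (fun v hv => (hfg v (hFdisj v hv)).symm) hBadg)
          )
        have := congrArg (fun t : ℕ => (t : ℝ)) this
        push_cast at this
        simpa [GoodSet] using this
      -- conclude
      by_cases hΩ : ((univ : Finset (V → κ)).card : ℝ) = 0
      · have h0 : ((GoodSet Bad S).filter (Bad E)).card = 0 := by
          have : ((univ : Finset (V → κ)).card) = 0 := by exact_mod_cast hΩ
          have hsub : (GoodSet Bad S).filter (Bad E) ⊆ univ := Finset.subset_univ _
          have := Finset.card_le_card hsub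
          omega
        rw [h0]
        simp only [Nat.cast_zero, zero_mul]
        exact Nat.cast_nonneg _
      · have hΩpos : (0:ℝ) < ((univ : Finset (V → κ)).card : ℝ) :=
          lt_of_le_of_ne (Nat.cast_nonneg _) (Ne.symm hΩ)
        have hepos : (0:ℝ) < Real.exp 1 := Real.exp_pos 1
        have hBbound : (((GoodSet Bad S₂).filter (Bad E)).card : ℝ)
            * (Real.exp 1 * ((Γ:ℝ) + 1)) ≤ ((GoodSet Bad S₂).card : ℝ) := by
          rw [← mul_le_mul_iff_of_pos_right hΩpos]
          calc (((GoodSet Bad S₂).filter (Bad E)).card : ℝ)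
                * (Real.exp 1 * ((Γ:ℝ) + 1)) * ((univ : Finset (V → κ)).card : ℝ)
              = ((univ.filter (Bad E)).card : ℝ) * (Real.exp 1 * ((Γ:ℝ) + 1))
                  * ((GoodSet Bad S₂).card : ℝ) := by
                rw [mul_right_comm]
                rw [hindep]
                ring
            _ ≤ ((univ : Finset (V → κ)).card : ℝ) * ((GoodSet Bad S₂).card : ℝ) := by
                apply mul_le_mul_of_nonneg_right (hp E hE) (Nat.cast_nonneg _)
            _ = ((GoodSet Bad S₂).card : ℝ) * ((univ : Finset (V → κ)).card : ℝ) := by ring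
        -- (1-x)^Γ * e ≥ 1
        have hxΓ : (1:ℝ) ≤ (1 - x) ^ Γ * Real.exp 1 := by
          have hΓR : (1:ℝ) ≤ (Γ:ℝ) := by exact_mod_cast hΓ
          have hΓRpos : (0:ℝ) < (Γ:ℝ) := by linarith
          have h1x : 1 - x = (Γ:ℝ) / ((Γ:ℝ) + 1) := by
            rw [hx]; field_simp; ring
          have hbig : ((Γ:ℝ) + 1) / (Γ:ℝ) ≤ Real.exp (1 / (Γ:ℝ)) := by
            have := Real.add_one_le_exp (1 / (Γ:ℝ))
            have : (1:ℝ) / Γ + 1 ≤ Real.exp (1/Γ) := this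
            calc ((Γ:ℝ) + 1) / (Γ:ℝ) = 1 / (Γ:ℝ) + 1 := by field_simp; ring
              _ ≤ _ := this
          have hbigpow : (((Γ:ℝ) + 1) / (Γ:ℝ)) ^ Γ ≤ Real.exp 1 := by
            calc (((Γ:ℝ) + 1) / (Γ:ℝ)) ^ Γ ≤ Real.exp (1 / (Γ:ℝ)) ^ Γ := by
                  apply pow_le_pow_left₀ (by positivity) hbig
              _ = Real.exp ((Γ:ℕ) * (1 / (Γ:ℝ))) := by
                  rw [Real.exp_nat_mul]
              _ = Real.exp 1 := by
                  congr 1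
                  field_simp
          have hprod : (1 - x) ^ Γ * (((Γ:ℝ) + 1) / (Γ:ℝ)) ^ Γ = 1 := by
            rw [h1x, ← mul_pow]
            rw [div_mul_div_comm]
            rw [mul_comm (Γ:ℝ)]
            rw [div_self (by positivity)]
            exact one_pow Γ
          calc (1:ℝ) = (1 - x) ^ Γ * (((Γ:ℝ) + 1) / (Γ:ℝ)) ^ Γ := hprod.symm
            _ ≤ (1 - x) ^ Γ * Real.exp 1 := by
                apply mul_le_mul_of_nonneg_left hbigpow
                exact pow_nonneg (by linarith [hx01.2]) Γ
        have hxS₁ : (1 - x) ^ Γ ≤ (1 - x) ^ S₁.card := by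
          apply pow_le_pow_of_le_one (by linarith [hx01.2]) (by linarith [hx01.1]) hS₁card
        have hlowS : (1 - x) ^ S₁.card * ((GoodSet Bad S₂).card : ℝ)
            ≤ ((GoodSet Bad S).card : ℝ) := by
          have := hlow S₁ Finset.Subset.rfl
          rwa [hunion] at this
        have hG2leG : ((GoodSet Bad S₂).card : ℝ) ≤ Real.exp 1 * ((GoodSet Bad S).card : ℝ) := by
          have hG2nonneg : (0:ℝ) ≤ ((GoodSet Bad S₂).card : ℝ) := Nat.cast_nonneg _
          calc ((GoodSet Bad S₂).card : ℝ)
              = 1 * ((GoodSet Bad S₂).card : ℝ) := (one_mul _).symm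
            _ ≤ ((1 - x) ^ Γ * Real.exp 1) * ((GoodSet Bad S₂).card : ℝ) := by
                apply mul_le_mul_of_nonneg_right hxΓ hG2nonneg
            _ ≤ ((1 - x) ^ S₁.card * Real.exp 1) * ((GoodSet Bad S₂).card : ℝ) := by
                apply mul_le_mul_of_nonneg_right _ hG2nonneg
                apply mul_le_mul_of_nonneg_right hxS₁ (le_of_lt hepos)
            _ = Real.exp 1 * ((1 - x) ^ S₁.card * ((GoodSet Bad S₂).card : ℝ)) := by ring
            _ ≤ Real.exp 1 * ((GoodSet Bad S).card : ℝ) := by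
                apply mul_le_mul_of_nonneg_left hlowS (le_of_lt hepos)
        have hAB : (((GoodSet Bad S).filter (Bad E)).card : ℝ)
            ≤ (((GoodSet Bad S₂).filter (Bad E)).card : ℝ) := by
          exact_mod_cast Finset.card_le_card
            (Finset.filter_subset_filter _ (GoodSet_anti Bad hS₂sub))
        -- combine: A*(Γ+1)*e ≤ B*(Γ+1)*e ≤ G2 ≤ e*G  ⇒  A*(Γ+1) ≤ G
        rw [← mul_le_mul_iff_of_pos_left hepos]
        calc Real.exp 1 * ((((GoodSet Bad S).filter (Bad E)).card : ℝ) * ((Γ:ℝ) + 1))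
            ≤ Real.exp 1 * ((((GoodSet Bad S₂).filter (Bad E)).card : ℝ) * ((Γ:ℝ) + 1)) := by
              apply mul_le_mul_of_nonneg_left _ (le_of_lt hepos)
              apply mul_le_mul_of_nonneg_right hAB (by positivity)
          _ = (((GoodSet Bad S₂).filter (Bad E)).card : ℝ) * (Real.exp 1 * ((Γ:ℝ) + 1)) := by ring
          _ ≤ ((GoodSet Bad S₂).card : ℝ) := hBbound
          _ ≤ Real.exp 1 * ((GoodSet Bad S).card : ℝ) := hG2leG

/-- LLL existence statement. -/
lemma lll_exists [Nonempty κ] (hΓ : 1 ≤ Γ)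
    (hdet : ∀ E ∈ 𝓔, ∀ f g : V → κ, (∀ v ∈ E, f v = g v) → Bad E f → Bad E g)
    (hdeg : ∀ E ∈ 𝓔, (𝓔.filter (fun F => F ≠ E ∧ (F ∩ E).Nonempty)).card ≤ Γ)
    (hp : ∀ E ∈ 𝓔, ((univ.filter (Bad E)).card : ℝ) * (Real.exp 1 * (Γ + 1))
            ≤ ((univ : Finset (V → κ)).card : ℝ)) :
    ∃ f : V → κ, ∀ E ∈ 𝓔, ¬ Bad E f := by
  have key : ∀ S : Finset (Finset V), S ⊆ 𝓔 → 0 < (GoodSet Bad S).card := by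
    intro S
    induction S using Finset.induction_on with
    | empty =>
      intro _
      rw [GoodSet_empty]
      exact Finset.card_pos.mpr Finset.univ_nonempty
    | insert _ _ hFS =>
      rename_i F S ihS
      intro hsub
      have hF : F ∈ 𝓔 := hsub (mem_insert_self F S)
      have hS : S ⊆ 𝓔 := (Finset.insert_subset_iff.mp hsub).2
      have hGpos : (0:ℝ) < ((GoodSet Bad S).card : ℝ) := by exact_mod_cast ihS hS
      have hmain := lll_main Bad 𝓔 Γ hΓ hdet hdeg hp S.card S le_rfl hS F hF
      have hins := GoodSet_card_insert Bad F S
      have hΓ2 : (2:ℝ) ≤ (Γ:ℝ) + 1 := by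
        have : (1:ℝ) ≤ (Γ:ℝ) := by exact_mod_cast hΓ
        linarith
      have hins' : ((GoodSet Bad (insert F S)).card : ℝ)
          = ((GoodSet Bad S).card : ℝ) - (((GoodSet Bad S).filter (Bad F)).card : ℝ) := by
        have := congrArg (fun t : ℕ => (t : ℝ)) hins
        push_cast at this
        linarith
      have hfle : (((GoodSet Bad S).filter (Bad F)).card : ℝ)
          < ((GoodSet Bad S).card : ℝ) := by
        nlinarith [hmain, hGpos, hΓ2, (by positivity : (0:ℝ) ≤ (((GoodSet Bad S).filter (Bad F)).card : ℝ))]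
      have : (0:ℝ) < ((GoodSet Bad (insert F S)).card : ℝ) := by
        rw [hins']; linarith
      exact_mod_cast this
  obtain ⟨f, hf⟩ := Finset.card_pos.mp (key 𝓔 Finset.Subset.rfl)
  simp only [GoodSet, mem_filter, mem_univ, true_and] at hf
  exact ⟨f, hf⟩

end LLL


section Count
variable {V : Type} [Fintype V] [DecidableEq V] {κ : Type} [Fintype κ] [DecidableEq κ]

/-- Count of bad (conflict-free-violating) colorings of one edge. -/
lemma bad_count (E : Finset V)
    [inst : DecidablePred fun f : V → κ => ¬ ∃ c, ∃! u : V, u ∈ E ∧ f u = c]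
    (hmk : E.card / 2 ≤ Fintype.card κ) :
    (univ.filter fun f : V → κ => ¬ ∃ c, ∃! u : V, u ∈ E ∧ f u = c).card
      ≤ (Fintype.card κ).choose (E.card / 2) *
        ((E.card / 2) ^ E.card * (Fintype.card κ) ^ (Fintype.card V - E.card)) := by
  classical
  set s := E.card with hs
  set m := s / 2 with hm
  have himg : ∀ f : V → κ, (¬ ∃ c, ∃! u : V, u ∈ E ∧ f u = c) → (E.image f).card ≤ m := by
    intro f hbad
    have hfiber : ∀ c ∈ E.image f, 2 ≤ (E.filter fun u => f u = c).card := by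
      intro c hc
      obtain ⟨u, hu, hfu⟩ := Finset.mem_image.mp hc
      have hne : (E.filter fun u => f u = c).Nonempty := ⟨u, mem_filter.mpr ⟨hu, hfu⟩⟩
      rcases Nat.lt_or_ge (E.filter fun u => f u = c).card 2 with h | h
      · exfalso
        interval_cases h' : (E.filter fun u => f u = c).card
        · exact Finset.Nonempty.card_pos hne |>.ne' (by omega)
        · obtain ⟨u₀, hu₀⟩ := Finset.card_eq_one.mp h'
          refine hbad ⟨c, u₀, ?_, ?_⟩
          · have : u₀ ∈ E.filter fun u => f u = c := hu₀ ▸ Finset.mem_singleton_self u₀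
            exact ⟨(mem_filter.mp this).1, (mem_filter.mp this).2⟩
          · intro u' hu'
            have : u' ∈ E.filter fun u => f u = c := mem_filter.mpr ⟨hu'.1, hu'.2⟩
            rw [hu₀] at this
            exact Finset.mem_singleton.mp this
      · exact h
    have hsum : s = ∑ c ∈ E.image f, (E.filter fun u => f u = c).card :=
      Finset.card_eq_sum_card_image f E
    have h2 : 2 * (E.image f).card ≤ s := by
      rw [hsum, two_mul]
      calc (E.image f).card + (E.image f).card
          = ∑ _c ∈ E.image f, 2 := by rw [Finset.sum_const]; ring
        _ ≤ ∑ c ∈ E.image f, (E.filter fun u => f u = c).card :=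
            Finset.sum_le_sum hfiber
    omega
  have hsub : (univ.filter fun f : V → κ => ¬ ∃ c, ∃! u : V, u ∈ E ∧ f u = c)
      ⊆ (Finset.powersetCard m (univ : Finset κ)).biUnion
          (fun T => Fintype.piFinset (fun v => if v ∈ E then T else univ)) := by
    intro f hf
    simp only [mem_filter, mem_univ, true_and] at hf
    obtain ⟨T, hTsub, hTcard⟩ := Finset.exists_superset_card_eq (himg f hf)
      (by simpa using hmk)
    refine Finset.mem_biUnion.mpr ⟨T, ?_, ?_⟩
    · exact Finset.mem_powersetCard.mpr ⟨Finset.subset_univ T, hTcard⟩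
    · rw [Fintype.mem_piFinset]
      intro v
      by_cases hv : v ∈ E
      · simp only [hv, if_true]
        exact hTsub (Finset.mem_image_of_mem f hv)
      · simp [hv]
  calc (univ.filter fun f : V → κ => ¬ ∃ c, ∃! u : V, u ∈ E ∧ f u = c).card
      ≤ ((Finset.powersetCard m (univ : Finset κ)).biUnion
          (fun T => Fintype.piFinset (fun v => if v ∈ E then T else univ))).card :=
        Finset.card_le_card hsub
    _ ≤ ∑ T ∈ Finset.powersetCard m (univ : Finset κ),
          (Fintype.piFinset (fun v => if v ∈ E then T else (univ : Finset κ))).card :=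
        Finset.card_biUnion_le
    _ ≤ (Fintype.card κ).choose m * (m ^ s * (Fintype.card κ) ^ (Fintype.card V - s)) := by
        have hcardpi : ∀ T ∈ Finset.powersetCard m (univ : Finset κ),
            (Fintype.piFinset (fun v => if v ∈ E then T else (univ : Finset κ))).card
              = m ^ s * (Fintype.card κ) ^ (Fintype.card V - s) := by
          intro T hT
          have hTcard : T.card = m := (Finset.mem_powersetCard.mp hT).2
          rw [Fintype.card_piFinset]
          rw [← Finset.prod_sdiff (Finset.subset_univ E)]
          have h1 : ∏ v ∈ E, (if v ∈ E then T else (univ : Finset κ)).card = m ^ s := by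
            rw [Finset.prod_congr rfl (fun v hv => by rw [if_pos hv])]
            rw [Finset.prod_const, hTcard]
          have h2 : ∏ v ∈ (univ : Finset V) \ E,
              (if v ∈ E then T else (univ : Finset κ)).card
                = (Fintype.card κ) ^ (Fintype.card V - s) := by
            rw [Finset.prod_congr rfl (fun v hv => by
              rw [if_neg (Finset.mem_sdiff.mp hv).2])]
            rw [Finset.prod_const, Finset.card_sdiff_of_subset (Finset.subset_univ E),
              Finset.card_univ, Finset.card_univ]
          rw [h1, h2, mul_comm]
        rw [Finset.sum_congr rfl hcardpi, Finset.sum_const,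
          Finset.card_powersetCard, Finset.card_univ, smul_eq_mul]
end Count


/-- A near-uniform hypergraph in which every hyperedge meets at most `Γ` other
hyperedges and every hyperedge `E` satisfies `r ≤ |E| ≤ ℓ·r` with
`r ≥ 2·log₂(4Γ)` admits a conflict-free coloring with at most `e·ℓ·r` colors. -/
theorem hypergraph_cf_coloring_near_uniform {V : Type} [Fintype V] [DecidableEq V]
    (𝓔 : Finset (Finset V)) (Γ ℓ : ℕ) (r : ℝ)
    (hΓ : 1 ≤ Γ) (hℓ : 1 ≤ ℓ)
    (hr : 2 * Real.logb 2 (4 * Γ) ≤ r)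
    (hΓbound : ∀ E ∈ 𝓔, (𝓔.filter (fun F => F ≠ E ∧ (F ∩ E).Nonempty)).card ≤ Γ)
    (hsize : ∀ E ∈ 𝓔, r ≤ (E.card : ℝ) ∧ (E.card : ℝ) ≤ ℓ * r) :
    ∃ f : V → Fin ⌊Real.exp 1 * ℓ * r⌋₊,
      ∀ E ∈ 𝓔, ∃ c : Fin ⌊Real.exp 1 * ℓ * r⌋₊, ∃! u : V, u ∈ E ∧ f u = c := by
  classical
  set k : ℕ := ⌊Real.exp 1 * ℓ * r⌋₊ with hk
  have hegt : (2.7182818283:ℝ) < Real.exp 1 := Real.exp_one_gt_d9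
  have he1 : (1:ℝ) ≤ Real.exp 1 := by linarith
  have hΓR1 : (1:ℝ) ≤ (Γ:ℝ) := by exact_mod_cast hΓ
  have hℓR1 : (1:ℝ) ≤ (ℓ:ℝ) := by exact_mod_cast hℓ
  -- r ≥ 4
  have hr4 : (4:ℝ) ≤ r := by
    have hGpos : (0:ℝ) < 4 * (Γ:ℝ) := by linarith
    have h2le : (2:ℝ) ≤ Real.logb 2 (4 * (Γ:ℝ)) := by
      rw [Real.le_logb_iff_rpow_le (by norm_num) hGpos]
      have h4 : (2:ℝ) ^ (2:ℝ) = 4 := by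
        rw [show (2:ℝ) ^ (2:ℝ) = (2:ℝ) ^ ((2:ℕ):ℝ) from by norm_num, Real.rpow_natCast]
        norm_num
      rw [h4]
      linarith
    linarith
  -- k is at least eℓr - 1
  have hkbig : Real.exp 1 * ℓ * r - 1 ≤ (k:ℝ) := by
    rw [hk]
    exact le_of_lt (Nat.sub_one_lt_floor _)
  have hkpos : 0 < k := by
    rw [hk]
    apply Nat.floor_pos.mpr
    have hA : (1:ℝ) ≤ Real.exp 1 * ℓ := by nlinarith [he1, hℓR1]
    nlinarith [hA, hr4]
  haveI : Nonempty (Fin k) := ⟨⟨0, hkpos⟩⟩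
  -- the bad-event predicate
  set Bad : Finset V → (V → Fin k) → Prop :=
    fun E f => ¬ ∃ c, ∃! u : V, u ∈ E ∧ f u = c with hBad
  haveI instBad : ∀ E, DecidablePred (Bad E) := fun E => Classical.decPred _
  -- determinedness
  have hdet : ∀ E ∈ 𝓔, ∀ f g : V → Fin k, (∀ v ∈ E, f v = g v) → Bad E f → Bad E g := by
    intro E _ f g hagree hbf hexg
    apply hbf
    obtain ⟨c, u, ⟨huE, hgu⟩, huniq⟩ := hexg
    refine ⟨c, u, ⟨huE, (hagree u huE).trans hgu⟩, ?_⟩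
    intro v ⟨hvE, hfv⟩
    exact huniq v ⟨hvE, ((hagree v hvE).symm).trans hfv⟩
  -- probability bound
  have hp : ∀ E ∈ 𝓔, ((univ.filter (Bad E)).card : ℝ) * (Real.exp 1 * ((Γ:ℝ) + 1))
      ≤ (((univ : Finset (V → Fin k)).card : ℝ)) := by
    intro E hE
    obtain ⟨hsr, hsl⟩ := hsize E hE
    set s := E.card with hs
    set m := s / 2 with hm
    have hs4 : 4 ≤ s := by
      have : (4:ℝ) ≤ (s:ℝ) := le_trans hr4 hsr
      exact_mod_cast this
    have hks : Real.exp 1 * s - 1 ≤ (k:ℝ) := by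
      have h1 : Real.exp 1 * s ≤ Real.exp 1 * (ℓ * r) := by
        apply mul_le_mul_of_nonneg_left hsl (by positivity)
      nlinarith [hkbig]
    have hmk : m ≤ Fintype.card (Fin k) := by
      rw [Fintype.card_fin]
      have hmons : (m:ℝ) ≤ (s:ℝ) := by
        have : m ≤ s := Nat.div_le_self s 2
        exact_mod_cast this
      have : (m:ℝ) ≤ (k:ℝ) := by nlinarith [hks]
      exact_mod_cast this
    have hcount := bad_count (κ := Fin k) E (inst := instBad E) (by
      rw [Fintype.card_fin]
      have := hmk
      rwa [Fintype.card_fin] at this)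
    rw [Fintype.card_fin] at hcount
    set n := Fintype.card V with hn
    have hsn : s ≤ n := by
      rw [hn, hs]
      exact Finset.card_le_univ E
    have huniv : ((univ : Finset (V → Fin k)).card : ℝ) = (k:ℝ) ^ n := by
      rw [Finset.card_univ]
      rw [show Fintype.card (V → Fin k) = (Fintype.card (Fin k)) ^ (Fintype.card V) from
        Fintype.card_fun]
      rw [Fintype.card_fin]
      push_cast
      rfl
    rw [huniv]
    have hkey := key_ineq k s m Γ r hm hs4 hΓ hsr hr hks
    have hcountR : ((univ.filter (Bad E)).card : ℝ)
        ≤ ((k.choose m : ℕ):ℝ) * ((m:ℝ) ^ s * (k:ℝ) ^ (n - s)) := by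
      exact_mod_cast hcount
    have hpot : (k:ℝ) ^ s * (k:ℝ) ^ (n - s) = (k:ℝ) ^ n := by
      rw [← pow_add, Nat.add_sub_cancel' hsn]
    calc ((univ.filter (Bad E)).card : ℝ) * (Real.exp 1 * ((Γ:ℝ) + 1))
        ≤ (((k.choose m : ℕ):ℝ) * ((m:ℝ) ^ s * (k:ℝ) ^ (n - s)))
            * (Real.exp 1 * ((Γ:ℝ) + 1)) := by
          apply mul_le_mul_of_nonneg_right hcountR (by positivity)
      _ = (((k.choose m : ℕ):ℝ) * (m:ℝ) ^ s * (Real.exp 1 * ((Γ:ℝ) + 1)))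
            * (k:ℝ) ^ (n - s) := by ring
      _ ≤ (k:ℝ) ^ s * (k:ℝ) ^ (n - s) :=
          mul_le_mul_of_nonneg_right hkey (pow_nonneg (Nat.cast_nonneg k) (n - s))
      _ = (k:ℝ) ^ n := hpot
  -- apply the LLL
  obtain ⟨f, hf⟩ := lll_exists Bad 𝓔 Γ hΓ hdet hΓbound hp
  exact ⟨f, fun E hE => not_not.mp (hf E hE)⟩
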